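/- Fix β > 0, n ≥ 1, and real numbers a_1, …, a_n with a_i > 0 for every i. Define the empirical DPO loss restricted to the environment weight by L(w) = (1/n) ∑_{i=1}^n −log σ(β w a_i) for w ∈ ℝ, where σ(z) = 1/(1 + exp(−z)). Then L is differentiable on ℝ with derivative L'(w) = −(β/n) ∑_{i=1}^n (1 − σ(β w a_i)) · a_i, and L'(w) < 0 for every w ∈ ℝ; in particular L is strictly decreasing on ℝ. -/

import Mathlib

/-- The logistic sigmoid `σ(z) = 1/(1 + exp(−z))`. -/
noncomputable def logisticSigma (z : ℝ) : ℝ := 1 / (1 + Real.exp (-z))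

lemma one_add_exp_pos (z : ℝ) : 0 < 1 + Real.exp (-z) := by positivity

lemma sigma_pos (z : ℝ) : 0 < logisticSigma z := by
  unfold logisticSigma; positivity

lemma sigma_lt_one (z : ℝ) : logisticSigma z < 1 := by
  unfold logisticSigma
  rw [div_lt_one (one_add_exp_pos z)]
  linarith [Real.exp_pos (-z)]

lemma neg_log_sigma (z : ℝ) : -Real.log (logisticSigma z) = Real.log (1 + Real.exp (-z)) := by
  unfold logisticSigma
  rw [Real.log_div one_ne_zero (ne_of_gt (one_add_exp_pos z)), Real.log_one]
  ring

lemma term_hasDerivAt (c w : ℝ) :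
    HasDerivAt (fun w : ℝ => -Real.log (logisticSigma (c * w)))
      (-(1 - logisticSigma (c * w)) * c) w := by
  have h1 : HasDerivAt (fun w : ℝ => -(c * w)) (-c) w := by
    simpa using ((hasDerivAt_id w).const_mul c).fun_neg
  have h2 : HasDerivAt (fun w : ℝ => 1 + Real.exp (-(c * w)))
      (Real.exp (-(c * w)) * (-c)) w := ((h1.exp)).const_add 1
  have h3 : HasDerivAt (fun w : ℝ => Real.log (1 + Real.exp (-(c * w))))
      (Real.exp (-(c * w)) * (-c) / (1 + Real.exp (-(c * w)))) w :=
    h2.log (ne_of_gt (one_add_exp_pos _))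
  have hfun : (fun w : ℝ => -Real.log (logisticSigma (c * w)))
      = fun w => Real.log (1 + Real.exp (-(c * w))) := funext fun w => neg_log_sigma _
  rw [hfun]
  convert h3 using 1
  have hs : 1 - logisticSigma (c * w) = Real.exp (-(c*w)) / (1 + Real.exp (-(c*w))) := by
    unfold logisticSigma
    field_simp
    ring
  rw [hs]; ring

/-- The empirical DPO loss restricted to the environment weight,
`L(w) = (1/n) ∑ᵢ −log σ(β w aᵢ)`, is differentiable with derivative
`L'(w) = −(β/n) ∑ᵢ (1 − σ(β w aᵢ)) aᵢ`, which is negative everywhere;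
in particular `L` is strictly decreasing. -/
theorem dpo_env_loss_deriv_neg_and_strictAnti
    (β : ℝ) (hβ : 0 < β) (n : ℕ) (hn : 1 ≤ n) (a : Fin n → ℝ) (ha : ∀ i, 0 < a i) :
    (∀ w : ℝ,
      HasDerivAt (fun w : ℝ => (1 / (n : ℝ)) * ∑ i, -Real.log (logisticSigma (β * w * a i)))
        (-(β / (n : ℝ)) * ∑ i, (1 - logisticSigma (β * w * a i)) * a i) w ∧
      -(β / (n : ℝ)) * ∑ i, (1 - logisticSigma (β * w * a i)) * a i < 0) ∧
    StrictAnti (fun w : ℝ => (1 / (n : ℝ)) * ∑ i, -Real.log (logisticSigma (β * w * a i))) := by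
  have hn0 : (0:ℝ) < (n:ℝ) := by exact_mod_cast hn
  have key : ∀ w : ℝ,
      HasDerivAt (fun w : ℝ => (1 / (n : ℝ)) * ∑ i, -Real.log (logisticSigma (β * w * a i)))
        (-(β / (n : ℝ)) * ∑ i, (1 - logisticSigma (β * w * a i)) * a i) w := by
    intro w
    have hsum : HasDerivAt (fun w : ℝ => ∑ i, -Real.log (logisticSigma (β * w * a i)))
        (∑ i, -(1 - logisticSigma (β * (a i) * w)) * (β * a i)) w := by
      apply HasDerivAt.fun_sum
      intro i _
      have := term_hasDerivAt (β * a i) w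
      simpa [mul_assoc, mul_comm, mul_left_comm] using this
    have := hsum.const_mul (1 / (n : ℝ))
    refine this.congr_deriv (Eq.symm ?_)
    rw [Finset.mul_sum, Finset.mul_sum]
    apply Finset.sum_congr rfl
    intro i _
    have : β * a i * w = β * w * a i := by ring
    rw [this]
    field_simp
  have neg : ∀ w : ℝ,
      -(β / (n : ℝ)) * ∑ i, (1 - logisticSigma (β * w * a i)) * a i < 0 := by
    intro w
    have hpos : 0 < ∑ i, (1 - logisticSigma (β * w * a i)) * a i := by
      apply Finset.sum_pos
      · intro i _
        exact mul_pos (by linarith [sigma_lt_one (β * w * a i)]) (ha i)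
      · exact Finset.univ_nonempty_iff.mpr (Fin.pos_iff_nonempty.mp (by omega))
    have : 0 < β / (n:ℝ) := div_pos hβ hn0
    nlinarith
  refine ⟨fun w => ⟨key w, neg w⟩, ?_⟩
  exact strictAnti_of_deriv_neg (fun w => by
    rw [(key w).deriv]; exact neg w)
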